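/- Suppose X₀F = λF identically (where X₀ is a prolonged vector field on jet variables, F = F(x, y, y⁽¹⁾, …, y⁽ⁿ⁾), λ smooth), F does not depend on the parameters h_α, and L_α⁽¹⁾ is linear homogeneous in (h₁, …, h_{N−1}) with the group action on h_α given by σ₀,α = h_α Dξ₀. Then the pair of conditions (i) [X₁F + (X₀ + ∑_α σ₀,α ∂_{h_α})L_α⁽¹⁾ − λL_α⁽¹⁾]|_{F=0} = 0 and (ii) (X₁F)|_{F=0} does not depend on h_α, is equivalent to the pair: (X₀L_α⁽¹⁾ + (Dξ₀ − λ)L_α⁽¹⁾)|_{F=0} = 0 and (X₁F)|_{F=0} = 0. -/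
import Mathlib


open Finset

/-- Decomposition of the first-order invariance condition for the first differential
approximation into the stability condition (eq:oo) and the condition (eq:ooo) on the
correction `X₁`. Here `Z` is the space of jet points; `L_α⁽¹⁾` is linear homogeneous
in the step sizes: `L z h = ∑_α h_α ℓ(z)_α` with `X₀L z h = ∑_α h_α (X₀ℓ)(z)_α`; the
action on the step sizes is `σ₀,α = h_α·Dξ₀`, so `∑_α σ₀,α ∂_{h_α}L = Dξ₀·L`. Given
that `X₀F = λF` identically and `X₁F` does not depend on the `h_α`, the full
first-order condition on `F = 0` is equivalent to the pair: the stability condition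
`X₀L + (Dξ₀ − λ)L = 0` on `F = 0`, and `X₁F = 0` on `F = 0`. -/
theorem first_order_condition_decomposition
    {Z : Type*} (n : ℕ)
    (F lam X1F Dξ₀ : Z → ℝ)
    (X0F : Z → ℝ)
    (ℓ X0ℓ : Z → Fin n → ℝ)
    (hexact : ∀ z, X0F z = lam z * F z) :
    (∀ z : Z, F z = 0 → ∀ h : Fin n → ℝ,
        X1F z
          + (∑ α : Fin n, h α * X0ℓ z α
              + ∑ α : Fin n, (h α * Dξ₀ z) * ℓ z α)
          - lam z * ∑ α : Fin n, h α * ℓ z α = 0)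
    ↔
    ((∀ z : Z, F z = 0 → ∀ h : Fin n → ℝ,
        ∑ α : Fin n, h α * X0ℓ z α
          + (Dξ₀ z - lam z) * ∑ α : Fin n, h α * ℓ z α = 0) ∧
      (∀ z : Z, F z = 0 → X1F z = 0)) := by
  have key : ∀ (z : Z) (h : Fin n → ℝ),
      ∑ α : Fin n, (h α * Dξ₀ z) * ℓ z α = Dξ₀ z * ∑ α : Fin n, h α * ℓ z α := by
    intro z h
    rw [Finset.mul_sum]
    exact Finset.sum_congr rfl fun α _ => by ring
  constructor
  · intro H
    have hX1 : ∀ z : Z, F z = 0 → X1F z = 0 := by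
      intro z hz
      have := H z hz 0
      simpa using this
    refine ⟨fun z hz h => ?_, hX1⟩
    have h1 := H z hz h
    rw [hX1 z hz, key] at h1
    rw [sub_mul]
    linarith
  · rintro ⟨Hs, HX⟩ z hz h
    have h1 := Hs z hz h
    rw [sub_mul] at h1
    rw [HX z hz, key]
    linarith
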